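/- Let T be a standard Borel space, ν a finite G-invariant Borel measure on T, G a countable group acting on T by Borel bijections with orbit equivalence relation R, and S a finite symmetric generating set of G. Suppose R is hyperfinite: there is an increasing sequence (Q_n) of Borel subrelations of R, each of whose classes is finite, such that for ν-almost every x ∈ T one has ⋃_n Q_n[x] = R[x]. Then for ν-almost every x ∈ T, liminf_{n→∞} #∂Q_n[x] / #Q_n[x] = 0; in particular ν-almost every orbit is Følner, i.e., it contains finite subsets A_n with #∂A_n / #A_n → 0. (This is the invariant-measure case of Proposition 4.2, i.e., the discrete form of the Carrière–Ghys direction of Theorem 1.1: amenable implies Følner.) -/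

import Mathlib

open MeasureTheory MulAction Set Filter

/-- The boundary of a set `A` with respect to a finite symmetric set `S` of group
elements: the points of `A` moved outside of `A` by some element of `S`. -/
def smulBoundary {G T : Type*} [SMul G T] (S : Finset G) (A : Set T) : Set T :=
  {y ∈ A | ∃ s ∈ S, s • y ∉ A}

section Aux

variable {T : Type*} [MeasurableSpace T] [StandardBorelSpace T]
  {G : Type*} [Group G] [Countable G] [MulAction G T]

/-- `g` is the canonical group element realizing the pair `(x, g • x)`, with respect to
an injection `ι : G → ℕ`. -/
def fCanon (ι : G → ℕ) (g : G) (x : T) : Prop := ∀ g' : G, g' • x = g • x → ι g ≤ ι g'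

lemma fCanon_exists (ι : G → ℕ) (g : G) (x : T) :
    ∃ g₀ : G, g₀ • x = g • x ∧ fCanon ι g₀ x := by
  have hne : (ι '' {g' | g' • x = g • x}).Nonempty := ⟨ι g, g, rfl, rfl⟩
  obtain ⟨g₀, hg₀mem, hg₀⟩ := Nat.sInf_mem hne
  refine ⟨g₀, hg₀mem, fun g' hg' => ?_⟩
  have hmem : ι g' ∈ ι '' {g' | g' • x = g • x} := ⟨g', by
    show g' • x = g • x
    rw [hg']; exact hg₀mem, rfl⟩
  rw [hg₀]
  exact Nat.sInf_le hmem

lemma fCanon_unique {ι : G → ℕ} (hι : Function.Injective ι) {g₁ g₂ : G} {x : T}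
    (h₁ : fCanon ι g₁ x) (h₂ : fCanon ι g₂ x) (h : g₁ • x = g₂ • x) : g₁ = g₂ :=
  hι (le_antisymm (h₁ g₂ h.symm) (h₂ g₁ h))

lemma tsum_ite_eq_ncard {α β : Type*} [Countable α] (P : α → Prop) (e : α → β) (Y : Set β)
    (hY : Y.Finite)
    (h1 : ∀ a, P a → e a ∈ Y)
    (h2 : ∀ a₁ a₂, P a₁ → P a₂ → e a₁ = e a₂ → a₁ = a₂)
    (h3 : ∀ y ∈ Y, ∃ a, P a ∧ e a = y) :
    ∑' a, ({a' | P a'} : Set α).indicator (fun _ => (1 : ENNReal)) a = Nat.card Y := by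
  classical
  have E : {a' | P a'} ≃ Y :=
    Equiv.ofBijective (fun a => ⟨e a.1, h1 a.1 a.2⟩)
      ⟨fun a₁ a₂ h => Subtype.ext (h2 a₁.1 a₂.1 a₁.2 a₂.2 (congrArg Subtype.val h)),
       fun y => by
        obtain ⟨a, ha, hae⟩ := h3 y.1 y.2
        exact ⟨⟨a, ha⟩, Subtype.ext hae⟩⟩
  calc ∑' a, ({a' | P a'} : Set α).indicator (fun _ => (1 : ENNReal)) a
      = ∑' a : {a' | P a'}, (fun _ => (1 : ENNReal)) (a : α) := (tsum_subtype _ _).symm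
    _ = ∑' _y : Y, (1 : ENNReal) := E.tsum_eq (fun _ => (1 : ENNReal))
    _ = Nat.card Y := by
        haveI := hY.fintype
        rw [tsum_fintype]
        simp [Finset.card_univ, Nat.card_eq_fintype_card]

/-- Counting function: the number of elements of the `q`-class of `x` lying in `B`,
computed as a sum over canonical group elements. -/
noncomputable def fCnt (ι : G → ℕ) (q : T → T → Prop) (B : Set T) (x : T) : ENNReal :=
  ∑' g : G, ({x' : T | q x' (g • x') ∧ g • x' ∈ B ∧ fCanon ι g x'}).indicator
    (fun _ => (1 : ENNReal)) x

lemma fCnt_eq {ι : G → ℕ} (hι : Function.Injective ι) {q : T → T → Prop}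
    (hsub : ∀ x y : T, q x y → y ∈ orbit G x) (hfin : ∀ x : T, {y | q x y}.Finite)
    (B : Set T) (x : T) :
    fCnt ι q B x = Nat.card ↥({y | q x y} ∩ B) := by
  classical
  have hconv : ∀ g : G, ({x' : T | q x' (g • x') ∧ g • x' ∈ B ∧ fCanon ι g x'}).indicator
      (fun _ => (1 : ENNReal)) x
      = ({g' : G | q x (g' • x) ∧ g' • x ∈ B ∧ fCanon ι g' x} : Set G).indicator
        (fun _ => (1 : ENNReal)) g := by
    intro g; simp only [Set.indicator_apply, Set.mem_setOf_eq]
  unfold fCnt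
  simp_rw [hconv]
  refine tsum_ite_eq_ncard _ (fun g => g • x) _ ((hfin x).subset inter_subset_left)
    (fun g hg => ⟨hg.1, hg.2.1⟩)
    (fun g₁ g₂ h₁ h₂ h => fCanon_unique hι h₁.2.2 h₂.2.2 h)
    (fun y hy => ?_)
  obtain ⟨g, hg⟩ := mem_orbit_iff.mp (hsub x y hy.1)
  obtain ⟨g₀, hg₀, hc⟩ := fCanon_exists ι g x
  rw [hg] at hg₀
  exact ⟨g₀, ⟨by rw [hg₀]; exact hy.1, by rw [hg₀]; exact hy.2, hc⟩, hg₀⟩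

lemma measurableSet_smul_eq (hact : ∀ g : G, Measurable fun x : T => g • x) (g g' : G) :
    MeasurableSet {x : T | g' • x = g • x} := by
  letI := upgradeStandardBorel T
  exact MeasureTheory.StronglyMeasurable.measurableSet_eq_fun
    (hact g').stronglyMeasurable (hact g).stronglyMeasurable

lemma measurableSet_fCanon (ι : G → ℕ) (hact : ∀ g : G, Measurable fun x : T => g • x) (g : G) :
    MeasurableSet {x : T | fCanon ι g x} := by
  have : {x : T | fCanon ι g x} = ⋂ g' : G, {x : T | g' • x = g • x → ι g ≤ ι g'} := by
    ext x; simp [fCanon, Set.mem_iInter]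
  rw [this]
  refine MeasurableSet.iInter fun g' => ?_
  by_cases h : ι g ≤ ι g'
  · have : {x : T | g' • x = g • x → ι g ≤ ι g'} = univ := by ext x; simp [h]
    rw [this]; exact .univ
  · have : {x : T | g' • x = g • x → ι g ≤ ι g'} = {x : T | g' • x = g • x}ᶜ := by
      ext x; simp [h]
    rw [this]; exact (measurableSet_smul_eq hact g g').compl

lemma measurableSet_pair (q : T → T → Prop) (hact : ∀ g : G, Measurable fun x : T => g • x)
    (hqm : MeasurableSet {p : T × T | q p.1 p.2}) (g g' : G) :
    MeasurableSet {x : T | q (g' • x) (g • x)} := by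
  have : Measurable fun x : T => ((g' • x : T), (g • x : T)) := (hact g').prodMk (hact g)
  exact this hqm

lemma fCnt_measurable (ι : G → ℕ) (q : T → T → Prop) (hact : ∀ g : G, Measurable fun x : T => g • x)
    (hqm : MeasurableSet {p : T × T | q p.1 p.2}) {B : Set T} (hB : MeasurableSet B) :
    Measurable (fCnt ι q B) := by
  classical
  unfold fCnt
  refine Measurable.ennreal_tsum fun g => ?_
  have hm : MeasurableSet {x : T | q x (g • x) ∧ g • x ∈ B ∧ fCanon ι g x} := by
    refine MeasurableSet.inter ?_ (MeasurableSet.inter ((hact g) hB)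
      (measurableSet_fCanon ι hact g))
    have h := measurableSet_pair q hact hqm g 1
    simp only [one_smul] at h
    exact h
  exact measurable_const.indicator hm

lemma measurableSet_fCntSet (ι : G → ℕ) (q : T → T → Prop)
    (hact : ∀ g : G, Measurable fun x : T => g • x)
    (hqm : MeasurableSet {p : T × T | q p.1 p.2}) {B : Set T} (hB : MeasurableSet B)
    (g : G) :
    MeasurableSet {x : T | q x (g • x) ∧ g • x ∈ B ∧ fCanon ι g x} := by
  refine MeasurableSet.inter ?_ (MeasurableSet.inter ((hact g) hB)
    (measurableSet_fCanon ι hact g))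
  have h := measurableSet_pair q hact hqm g 1
  simp only [one_smul] at h
  exact h

lemma measurableSet_fCntSet' (ι : G → ℕ) (q : T → T → Prop)
    (hact : ∀ g : G, Measurable fun x : T => g • x)
    (hqm : MeasurableSet {p : T × T | q p.1 p.2}) {B : Set T} (hB : MeasurableSet B)
    (g : G) :
    MeasurableSet {y : T | q (g⁻¹ • y) y ∧ y ∈ B ∧ fCanon ι g (g⁻¹ • y)} := by
  have h1 : MeasurableSet {y : T | q (g⁻¹ • y) y} := by
    have h := measurableSet_pair q hact hqm 1 g⁻¹
    simp only [one_smul] at h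
    exact h
  exact h1.inter (hB.inter ((hact g⁻¹) (measurableSet_fCanon ι hact g)))

/-- Mass transport identity: the expected proportion of the `q`-class lying in `B`
equals the measure of `B`. -/
lemma fCnt_lintegral
    (hact : ∀ g : G, Measurable fun x : T => g • x)
    (ν : Measure T)
    (hinv : ∀ g : G, Measure.map (fun x : T => g • x) ν = ν)
    {ι : G → ℕ} (hι : Function.Injective ι)
    {q : T → T → Prop} (heq : Equivalence q)
    (hqm : MeasurableSet {p : T × T | q p.1 p.2})
    (hsub : ∀ x y : T, q x y → y ∈ orbit G x) (hfin : ∀ x : T, {y | q x y}.Finite)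
    {B : Set T} (hB : MeasurableSet B) :
    ∫⁻ x, fCnt ι q B x * (fCnt ι q univ x)⁻¹ ∂ν = ν B := by
  have hNval : ∀ x : T, fCnt ι q univ x = (Nat.card ↥{y | q x y} : ENNReal) := by
    intro x
    rw [fCnt_eq hι hsub hfin, Set.inter_univ]
  have hN0 : ∀ x : T, fCnt ι q univ x ≠ 0 := by
    intro x
    rw [hNval]
    haveI : Finite ↥{y | q x y} := (hfin x).to_subtype
    haveI : Nonempty ↥{y | q x y} := ⟨⟨x, heq.refl x⟩⟩
    exact_mod_cast Nat.card_pos.ne'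
  have hNtop : ∀ x : T, fCnt ι q univ x ≠ ⊤ := by
    intro x; rw [hNval]; exact ENNReal.natCast_ne_top _
  have hNmeas : Measurable (fCnt ι q univ) :=
    fCnt_measurable ι q hact hqm MeasurableSet.univ
  set D : G → Set T := fun g => {x' : T | q x' (g • x') ∧ g • x' ∈ B ∧ fCanon ι g x'}
    with hD
  set E : G → Set T := fun g => {y : T | q (g⁻¹ • y) y ∧ y ∈ B ∧ fCanon ι g (g⁻¹ • y)}
    with hE
  have hDmeas : ∀ g, MeasurableSet (D g) := fun g =>
    measurableSet_fCntSet ι q hact hqm hB g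
  have hEmeas : ∀ g, MeasurableSet (E g) := fun g =>
    measurableSet_fCntSet' ι q hact hqm hB g
  have hterm_meas : ∀ g : G,
      Measurable fun x => (D g).indicator (fun _ => (1 : ENNReal)) x
        * (fCnt ι q univ x)⁻¹ :=
    fun g => (measurable_const.indicator (hDmeas g)).mul hNmeas.inv
  have hterm_meas' : ∀ g : G,
      Measurable fun y => (E g).indicator (fun _ => (1 : ENNReal)) y
        * (fCnt ι q univ y)⁻¹ :=
    fun g => (measurable_const.indicator (hEmeas g)).mul hNmeas.inv
  calc ∫⁻ x, fCnt ι q B x * (fCnt ι q univ x)⁻¹ ∂ν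
      = ∫⁻ x, ∑' g : G, (D g).indicator (fun _ => (1 : ENNReal)) x
          * (fCnt ι q univ x)⁻¹ ∂ν := by
        refine lintegral_congr fun x => ?_
        rw [ENNReal.tsum_mul_right]
        rfl
    _ = ∑' g : G, ∫⁻ x, (D g).indicator (fun _ => (1 : ENNReal)) x
          * (fCnt ι q univ x)⁻¹ ∂ν :=
        lintegral_tsum fun g => (hterm_meas g).aemeasurable
    _ = ∑' g : G, ∫⁻ y, (E g).indicator (fun _ => (1 : ENNReal)) y
          * (fCnt ι q univ y)⁻¹ ∂ν := by
        refine tsum_congr fun g => ?_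
        conv_lhs => rw [← hinv g⁻¹]
        rw [lintegral_map (hterm_meas g) (hact g⁻¹)]
        refine lintegral_congr fun y => ?_
        by_cases hy : y ∈ E g
        · obtain ⟨hq, hyB, hc⟩ := hy
          have hmem : g⁻¹ • y ∈ D g := by
            refine ⟨?_, ?_, hc⟩
            · rw [smul_inv_smul]; exact hq
            · rw [smul_inv_smul]; exact hyB
          have hEclass : {z | q (g⁻¹ • y) z} = {z | q y z} := by
            ext z
            exact ⟨fun h => heq.trans (heq.symm hq) h, fun h => heq.trans hq h⟩
          have hNeq : fCnt ι q univ (g⁻¹ • y) = fCnt ι q univ y := by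
            rw [hNval, hNval]
            congr 2
            rw [hEclass]
          rw [Set.indicator_of_mem hmem, Set.indicator_of_mem (show y ∈ E g from
            ⟨hq, hyB, hc⟩), hNeq]
        · have hnm : g⁻¹ • y ∉ D g := by
            intro hmem
            obtain ⟨h1, h2, h3⟩ := hmem
            rw [smul_inv_smul] at h1 h2
            exact hy ⟨h1, h2, h3⟩
          rw [Set.indicator_of_notMem hnm, Set.indicator_of_notMem hy,
            zero_mul, zero_mul]
    _ = ∫⁻ y, ∑' g : G, (E g).indicator (fun _ => (1 : ENNReal)) y
          * (fCnt ι q univ y)⁻¹ ∂ν :=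
        (lintegral_tsum fun g => (hterm_meas' g).aemeasurable).symm
    _ = ∫⁻ y, B.indicator (fun _ => (1 : ENNReal)) y ∂ν := by
        refine lintegral_congr fun y => ?_
        rw [ENNReal.tsum_mul_right]
        by_cases hyB : y ∈ B
        · have hsum : (∑' g : G, (E g).indicator (fun _ => (1 : ENNReal)) y)
              = (Nat.card ↥{z | q y z} : ENNReal) := by
            have hconv : ∀ g : G, (E g).indicator (fun _ => (1 : ENNReal)) y
                = ({g' : G | q (g'⁻¹ • y) y ∧ y ∈ B ∧ fCanon ι g' (g'⁻¹ • y)} :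
                    Set G).indicator (fun _ => (1 : ENNReal)) g := by
              intro g
              by_cases h : q (g⁻¹ • y) y ∧ y ∈ B ∧ fCanon ι g (g⁻¹ • y)
              · rw [Set.indicator_of_mem (show y ∈ E g from h),
                  Set.indicator_of_mem (show g ∈ _ from h)]
              · rw [Set.indicator_of_notMem (show y ∉ E g from h),
                  Set.indicator_of_notMem (show g ∉ _ from h)]
            simp_rw [hconv]
            refine tsum_ite_eq_ncard _ (fun g => g⁻¹ • y) _ (hfin y)
              (fun g hg => heq.symm hg.1) ?_ ?_
            · rintro g₁ g₂ ⟨hq1, -, hc1⟩ ⟨hq2, -, hc2⟩ h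
              have h' : g₁⁻¹ • y = g₂⁻¹ • y := h
              have h1 : g₁ • (g₁⁻¹ • y) = y := smul_inv_smul g₁ y
              have h2' : g₂ • (g₁⁻¹ • y) = y := by rw [h']; exact smul_inv_smul g₂ y
              have hc2' : fCanon ι g₂ (g₁⁻¹ • y) := by rw [h']; exact hc2
              exact fCanon_unique hι hc1 hc2' (by rw [h1, h2'])
            · rintro z hz
              have hq' : q z y := heq.symm hz
              obtain ⟨g, hg⟩ := mem_orbit_iff.mp (hsub z y hq')
              obtain ⟨g₀, hg₀, hc⟩ := fCanon_exists ι g z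
              rw [hg] at hg₀
              have hzy : g₀⁻¹ • y = z := by rw [← hg₀, inv_smul_smul]
              refine ⟨g₀, ⟨?_, hyB, ?_⟩, hzy⟩
              · rw [hzy]; exact hq'
              · rw [hzy]; exact hc
          rw [hsum, Set.indicator_of_mem hyB, ← hNval y]
          exact ENNReal.mul_inv_cancel (hN0 y) (hNtop y)
        · have hzero : ∀ g : G, (E g).indicator (fun _ => (1 : ENNReal)) y = 0 :=
            fun g => Set.indicator_of_notMem (fun hmem => hyB hmem.2.1) _
          simp [hzero, Set.indicator_of_notMem hyB]
    _ = ν B := lintegral_indicator_one hB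

end Aux

lemma nat_card_biUnion_le {β ι : Type*} (S : Finset ι) (A : ι → Set β) :
    Nat.card ↥(⋃ s ∈ S, A s) ≤ ∑ s ∈ S, Nat.card ↥(A s) := by
  classical
  induction S using Finset.induction_on with
  | empty => simp
  | insert a s ha ih =>
    rw [Finset.sum_insert ha]
    calc Nat.card ↥(⋃ x ∈ insert a s, A x)
        = Nat.card ↥(A a ∪ ⋃ x ∈ s, A x) := by rw [Finset.set_biUnion_insert]
      _ ≤ Nat.card ↥(A a) + Nat.card ↥(⋃ x ∈ s, A x) := by
          simp only [Nat.card_coe_set_eq]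
          exact Set.ncard_union_le _ _
      _ ≤ Nat.card ↥(A a) + ∑ x ∈ s, Nat.card ↥(A x) := Nat.add_le_add_left ih _


/-- **Proposition 4.2, invariant-measure case (the discrete Carrière–Ghys direction of
Theorem 1.1: amenable implies Følner).**
Let `ν` be a finite invariant measure for the action of a countable group `G` on a
standard Borel space `T` by Borel bijections, and let `S` be a finite symmetric
generating set of `G`. If the orbit equivalence relation `R` is hyperfinite, witnessed
by an increasing sequence `Q n` of Borel subrelations with finite classes exhausting
`R` almost everywhere, then for `ν`-almost every `x` the isoperimetric ratios
`#∂Q_n[x] / #Q_n[x]` have lower limit `0`; in particular almost every orbit is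
Følner. -/
theorem hyperfinite_implies_folner_invariant
    {T : Type*} [MeasurableSpace T] [StandardBorelSpace T]
    {G : Type*} [Group G] [Countable G] [MulAction G T]
    (hact : ∀ g : G, Measurable fun x : T => g • x)
    (ν : Measure T) [IsFiniteMeasure ν]
    (hinv : ∀ g : G, Measure.map (fun x : T => g • x) ν = ν)
    (S : Finset G) (hSsym : ∀ s ∈ S, s⁻¹ ∈ S)
    (hSgen : Subgroup.closure (S : Set G) = ⊤)
    (Q : ℕ → T → T → Prop)
    (hQequiv : ∀ n, Equivalence (Q n))
    (hQmeas : ∀ n, MeasurableSet {p : T × T | Q n p.1 p.2})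
    (hQsub : ∀ n, ∀ x y : T, Q n x y → y ∈ orbit G x)
    (hQfin : ∀ n, ∀ x : T, {y | Q n x y}.Finite)
    (hQmono : ∀ n, ∀ x y : T, Q n x y → Q (n + 1) x y)
    (hQexhaust : ∀ᵐ x ∂ν, ∀ y ∈ orbit G x, ∃ n, Q n x y) :
    ∀ᵐ x ∂ν,
      liminf (fun n =>
          (Nat.card ↥(smulBoundary S {y | Q n x y}) : ℝ) / Nat.card ↥{y | Q n x y})
        atTop = 0 ∧
      ∃ A : ℕ → Set T,
        (∀ n, (A n).Finite ∧ (A n).Nonempty ∧ A n ⊆ orbit G x) ∧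
        Tendsto (fun n => (Nat.card ↥(smulBoundary S (A n)) : ℝ) / Nat.card ↥(A n))
          atTop (nhds 0) := by
  classical
  obtain ⟨ι, hι⟩ := exists_injective_nat G
  -- the "bad" sets
  set Bs : G → ℕ → Set T := fun s n => {z : T | ¬ Q n z (s • z)} with hBs
  have hBsmeas : ∀ (s : G) (n : ℕ), MeasurableSet (Bs s n) := by
    intro s n
    have h := measurableSet_pair (Q n) hact (hQmeas n) s 1
    simp only [one_smul] at h
    exact h.compl
  have hNval : ∀ (n : ℕ) (x : T),
      fCnt ι (Q n) Set.univ x = (Nat.card ↥{y | Q n x y} : ENNReal) := by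
    intro n x
    rw [fCnt_eq hι (hQsub n) (hQfin n), Set.inter_univ]
  have hN0 : ∀ (n : ℕ) (x : T), fCnt ι (Q n) Set.univ x ≠ 0 := by
    intro n x
    rw [hNval]
    haveI : Finite ↥{y | Q n x y} := (hQfin n x).to_subtype
    haveI : Nonempty ↥{y | Q n x y} := ⟨⟨x, (hQequiv n).refl x⟩⟩
    exact_mod_cast Nat.card_pos.ne'
  -- the dominating sequence
  set v : ℕ → T → ENNReal := fun n x =>
    ∑ s ∈ S, fCnt ι (Q n) (Bs s n) x * (fCnt ι (Q n) Set.univ x)⁻¹ with hv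
  have hvmeas : ∀ n, Measurable (v n) := by
    intro n
    exact Finset.measurable_sum S fun s _ =>
      (fCnt_measurable ι (Q n) hact (hQmeas n) (hBsmeas s n)).mul
        (fCnt_measurable ι (Q n) hact (hQmeas n) MeasurableSet.univ).inv
  have hIv : ∀ n, ∫⁻ x, v n x ∂ν = ∑ s ∈ S, ν (Bs s n) := by
    intro n
    rw [hv]
    beta_reduce
    rw [lintegral_finset_sum (f := fun s x => fCnt ι (Q n) (Bs s n) x * (fCnt ι (Q n) univ x)⁻¹) S fun s _ =>
      (fCnt_measurable ι (Q n) hact (hQmeas n) (hBsmeas s n)).mul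
        (fCnt_measurable ι (Q n) hact (hQmeas n) MeasurableSet.univ).inv]
    exact Finset.sum_congr rfl fun s _ =>
      fCnt_lintegral hact ν hinv hι (hQequiv n) (hQmeas n) (hQsub n) (hQfin n)
        (hBsmeas s n)
  have hTend : ∀ s : G, Tendsto (fun n => ν (Bs s n)) atTop (nhds 0) := by
    intro s
    have hanti : Antitone fun n => Bs s n := by
      refine antitone_nat_of_succ_le fun n z hz => ?_
      exact fun hq => hz (hQmono n z _ hq)
    have h0 : ν (⋂ n, Bs s n) = 0 := by
      refine measure_mono_null (fun x hx => ?_) (ae_iff.mp hQexhaust)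
      intro hall
      obtain ⟨n, hn⟩ := hall (s • x) (mem_orbit_iff.mpr ⟨s, rfl⟩)
      exact (Set.mem_iInter.mp hx n) hn
    have h := tendsto_measure_iInter_atTop
      (fun n => (hBsmeas s n).nullMeasurableSet) hanti ⟨0, measure_ne_top ν _⟩
    rw [h0] at h
    exact h
  have hwTend : Tendsto (fun n => ∑ s ∈ S, ν (Bs s n)) atTop (nhds 0) := by
    have h := tendsto_finset_sum S (fun s _ => hTend s)
    simpa using h
  have hliminfI : liminf (fun n => ∫⁻ x, v n x ∂ν) atTop = 0 := by
    refine le_antisymm ?_ zero_le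
    calc liminf (fun n => ∫⁻ x, v n x ∂ν) atTop
        ≤ liminf (fun n => ∑ s ∈ S, ν (Bs s n)) atTop :=
          liminf_le_liminf (Eventually.of_forall fun n => le_of_eq (hIv n))
      _ = 0 := hwTend.liminf_eq
  have hFat : ∫⁻ x, liminf (fun n => v n x) atTop ∂ν = 0 :=
    le_antisymm ((lintegral_liminf_le hvmeas).trans hliminfI.le) zero_le
  have hae : ∀ᵐ x ∂ν, liminf (fun n => v n x) atTop = 0 := by
    have hm : Measurable fun x => liminf (fun n => v n x) atTop :=
      Measurable.liminf hvmeas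
    filter_upwards [(lintegral_eq_zero_iff hm).mp hFat] with x hx
    simpa using hx
  -- pointwise comparison
  have hu_le_v : ∀ (n : ℕ) (x : T),
      (Nat.card ↥(smulBoundary S {y | Q n x y}) : ENNReal)
        * (fCnt ι (Q n) Set.univ x)⁻¹ ≤ v n x := by
    intro n x
    have hbsub : smulBoundary S {y | Q n x y}
        ⊆ ⋃ s ∈ S, ({y | Q n x y} ∩ Bs s n) := by
      rintro y ⟨hyC, s, hsS, hsy⟩
      refine Set.mem_biUnion hsS ⟨hyC, fun hq => ?_⟩
      exact hsy ((hQequiv n).trans hyC hq)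
    have hfinU : (⋃ s ∈ S, ({y | Q n x y} ∩ Bs s n)).Finite :=
      Set.Finite.biUnion S.finite_toSet fun s _ =>
        (hQfin n x).subset Set.inter_subset_left
    have h1 : Nat.card ↥(smulBoundary S {y | Q n x y})
        ≤ ∑ s ∈ S, Nat.card ↥({y | Q n x y} ∩ Bs s n) :=
      (Nat.card_mono hfinU hbsub).trans (nat_card_biUnion_le S _)
    have hcard : (Nat.card ↥(smulBoundary S {y | Q n x y}) : ENNReal)
        ≤ ∑ s ∈ S, fCnt ι (Q n) (Bs s n) x := by
      calc (Nat.card ↥(smulBoundary S {y | Q n x y}) : ENNReal)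
          ≤ ((∑ s ∈ S, Nat.card ↥({y | Q n x y} ∩ Bs s n) : ℕ) : ENNReal) :=
            Nat.cast_le.mpr h1
        _ = ∑ s ∈ S, fCnt ι (Q n) (Bs s n) x := by
            rw [Nat.cast_sum]
            exact Finset.sum_congr rfl fun s _ =>
              (fCnt_eq hι (hQsub n) (hQfin n) _ x).symm
    calc (Nat.card ↥(smulBoundary S {y | Q n x y}) : ENNReal)
          * (fCnt ι (Q n) Set.univ x)⁻¹
        ≤ (∑ s ∈ S, fCnt ι (Q n) (Bs s n) x) * (fCnt ι (Q n) Set.univ x)⁻¹ :=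
          mul_le_mul_left hcard _
      _ = v n x := Finset.sum_mul ..
  -- conclusion
  filter_upwards [hae] with x hx
  haveI hfinsub : ∀ n : ℕ, Finite ↥{y | Q n x y} := fun n => (hQfin n x).to_subtype
  haveI hnesub : ∀ n : ℕ, Nonempty ↥{y | Q n x y} :=
    fun n => ⟨⟨x, (hQequiv n).refl x⟩⟩
  set f : ℕ → ℝ := fun n =>
    (Nat.card ↥(smulBoundary S {y | Q n x y}) : ℝ) / Nat.card ↥{y | Q n x y} with hf
  have hcpos : ∀ n, (0 : ℝ) < (Nat.card ↥{y | Q n x y} : ℝ) := by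
    intro n
    exact_mod_cast @Nat.card_pos _ (hnesub n) (hfinsub n)
  have hble : ∀ n, Nat.card ↥(smulBoundary S {y | Q n x y})
      ≤ Nat.card ↥{y | Q n x y} :=
    fun n => Nat.card_mono (hQfin n x) fun y hy => hy.1
  have hf0 : ∀ n, 0 ≤ f n := fun n =>
    div_nonneg (Nat.cast_nonneg _) (Nat.cast_nonneg _)
  have hf1 : ∀ n, f n ≤ 1 := fun n =>
    (div_le_one (hcpos n)).mpr (Nat.cast_le.mpr (hble n))
  have hofReal : ∀ n, ENNReal.ofReal (f n)
      = (Nat.card ↥(smulBoundary S {y | Q n x y}) : ENNReal)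
        * (fCnt ι (Q n) Set.univ x)⁻¹ := by
    intro n
    rw [hf]
    rw [ENNReal.ofReal_div_of_pos (hcpos n), ENNReal.ofReal_natCast,
      ENNReal.ofReal_natCast, hNval n x, div_eq_mul_inv]
  have hfreq : ∀ ε : ℝ, 0 < ε → ∃ᶠ n in atTop, f n < ε := by
    intro ε hε
    by_contra hcon
    rw [not_frequently] at hcon
    have hev : ∀ᶠ n in atTop, ENNReal.ofReal ε ≤ v n x := by
      filter_upwards [hcon] with n hn
      calc ENNReal.ofReal ε ≤ ENNReal.ofReal (f n) :=
            ENNReal.ofReal_le_ofReal (not_lt.mp hn)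
        _ = _ := hofReal n
        _ ≤ v n x := hu_le_v n x
    have hle : ENNReal.ofReal ε ≤ liminf (fun n => v n x) atTop :=
      le_liminf_of_le (by isBoundedDefault) hev
    rw [hx] at hle
    exact absurd (le_zero_iff.mp hle) (ENNReal.ofReal_pos.mpr hε).ne'
  have hbdd : IsBoundedUnder (· ≥ ·) atTop f := isBoundedUnder_of ⟨0, hf0⟩
  have hbdd' : IsBoundedUnder (· ≤ ·) atTop f := isBoundedUnder_of ⟨1, hf1⟩
  constructor
  · refine le_antisymm ?_
      (le_liminf_of_le hbdd'.isCoboundedUnder_ge (Eventually.of_forall hf0))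
    by_contra hL
    push_neg at hL
    have h2 : liminf f atTop ≤ liminf f atTop / 2 :=
      liminf_le_of_frequently_le
        ((hfreq _ (by linarith)).mono fun n hn => hn.le) hbdd
    linarith
  · have hfreq' : ∀ k : ℕ, ∃ᶠ n in atTop, f n < 1 / ((k : ℝ) + 1) :=
      fun k => hfreq _ (by positivity)
    obtain ⟨φ, hφmono, hφ⟩ := extraction_forall_of_frequently hfreq'
    refine ⟨fun k => {y | Q (φ k) x y},
      fun k => ⟨hQfin _ x, ⟨x, (hQequiv _).refl x⟩, fun y hy => hQsub _ x y hy⟩, ?_⟩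
    exact squeeze_zero (fun k => hf0 _) (fun k => (hφ k).le)
      tendsto_one_div_add_atTop_nhds_zero_nat
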